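/- Let $G$ be a finitely generated infinite group with word metric, and let $\Gamma \subseteq G$ be asymptotically sparse. Then for every right-invariant mean $\overline{m}$ on $\ell^\infty(G)$ one has $\overline{m}(\chi_\Gamma) = 0$. -/

import Mathlib

/-- The space `ℓ∞(G)` of bounded real-valued functions on `G`, as a submodule of `G → ℝ`. -/
def Linf (G : Type*) : Submodule ℝ (G → ℝ) where
  carrier := {f | ∃ C : ℝ, ∀ x, |f x| ≤ C}
  add_mem' := by
    rintro f g ⟨C, hC⟩ ⟨D, hD⟩
    exact ⟨C + D, fun x => by
      simpa using (abs_add_le (f x) (g x)).trans (add_le_add (hC x) (hD x))⟩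
  zero_mem' := ⟨0, fun x => by simp⟩
  smul_mem' := by
    rintro c f ⟨C, hC⟩
    exact ⟨|c| * C, fun x => by
      simpa [abs_mul] using mul_le_mul_of_nonneg_left (hC x) (abs_nonneg c)⟩

open Classical in
/-- The characteristic function of a set, as an element of `ℓ∞`. -/
noncomputable def chi {G : Type*} (A : Set G) : Linf G :=
  ⟨fun x => if x ∈ A then 1 else 0, ⟨1, fun x => by by_cases h : x ∈ A <;> simp [h]⟩⟩

/-- Left translation action on `ℓ∞(G)`: `(g • φ)(x) = φ(g⁻¹ x)`. -/
def lT {G : Type*} [Group G] (g : G) (φ : Linf G) : Linf G :=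
  ⟨fun x => (φ : G → ℝ) (g⁻¹ * x), by obtain ⟨C, hC⟩ := φ.2; exact ⟨C, fun x => hC _⟩⟩

/-- Right translation action on `ℓ∞(G)`: `(φ • g)(x) = φ(x g)`. -/
def rT {G : Type*} [Group G] (g : G) (φ : Linf G) : Linf G :=
  ⟨fun x => (φ : G → ℝ) (x * g), by obtain ⟨C, hC⟩ := φ.2; exact ⟨C, fun x => hC _⟩⟩

/-- A mean on `G`: a normalized positive linear functional on `ℓ∞(G)`. -/
structure Mean (G : Type*) where
  toFun : Linf G →ₗ[ℝ] ℝ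
  normalized : toFun (chi Set.univ) = 1
  pos : ∀ φ : Linf G, (∀ x, 0 ≤ (φ : G → ℝ) x) → 0 ≤ toFun φ

/-- A mean is left invariant if it is invariant under left translations. -/
def Mean.LeftInvariant {G : Type*} [Group G] (m : Mean G) : Prop :=
  ∀ (g : G) (φ : Linf G), m.toFun (lT g φ) = m.toFun φ

/-- A mean is right invariant if it is invariant under right translations. -/
def Mean.RightInvariant {G : Type*} [Group G] (m : Mean G) : Prop :=
  ∀ (g : G) (φ : Linf G), m.toFun (rT g φ) = m.toFun φ

/-- The word distance on a group `G` with respect to a generating set `Sg`: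
`d(g,h)` is the minimal length of a word in `Sg ∪ Sg⁻¹` representing `g⁻¹h`. -/
noncomputable def wordDist {G : Type*} [Group G] (Sg : Set G) (g h : G) : ℕ :=
  sInf {n | ∃ w : List G, w.length = n ∧ (∀ x ∈ w, x ∈ Sg ∨ x⁻¹ ∈ Sg) ∧ w.prod = g⁻¹ * h}

/-- The closed ball of radius `r` around `g` in the word metric. -/
noncomputable def wball {G : Type*} [Group G] (Sg : Set G) (g : G) (r : ℕ) : Set G :=
  {x | wordDist Sg g x ≤ r}

/-- The `r`-boundary `∂_r A = {g : 0 < d(g, A) ≤ r}` of a set `A`. -/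
noncomputable def rBoundary {G : Type*} [Group G] (Sg : Set G) (r : ℕ) (A : Set G) : Set G :=
  {g | g ∉ A ∧ ∃ a ∈ A, wordDist Sg a g ≤ r}

/-- A Følner sequence: a sequence of nonempty finite subsets whose `r`-boundaries are
asymptotically negligible for every `r > 0`. -/
def IsFolner {G : Type*} [Group G] (Sg : Set G) (S : ℕ → Finset G) : Prop :=
  (∀ j, (S j).Nonempty) ∧ ∀ r : ℕ, 0 < r →
    Filter.Tendsto (fun j => ((rBoundary Sg r (S j : Set G)).ncard : ℝ) / (S j).card)
      Filter.atTop (nhds 0)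

/-- `c : G → ℝ` is a boundary in the degree-zero uniformly finite chain complex: there is
a bounded `1`-chain `b : G² → ℝ`, supported on pairs of uniformly bounded distance, with
`∂₁ b = c`, where `∂₁ b (x) = ∑_y b(y,x) - ∑_y b(x,y)`. -/
noncomputable def IsUFBoundary {G : Type*} [Group G] (Sg : Set G) (c : G → ℝ) : Prop :=
  ∃ b : G × G → ℝ,
    (∃ C : ℝ, ∀ p, |b p| ≤ C) ∧
    (∃ R : ℕ, ∀ p : G × G, R < wordDist Sg p.1 p.2 → b p = 0) ∧
    ∀ x : G, c x = (∑ᶠ y, b (y, x)) - (∑ᶠ y, b (x, y))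

/-- A subset `Γ` of a finitely generated group is asymptotically sparse: there is `C`
such that for every radius `r > 0`, outside a large ball around the identity, every
`r`-ball meets `Γ` in at most `C` points. -/
noncomputable def IsSparse {G : Type*} [Group G] (Sg : Set G) (Γ : Set G) : Prop :=
  ∃ C : ℕ, ∀ r : ℕ, 0 < r → ∃ R : ℕ, ∀ g : G, R < wordDist Sg 1 g →
    Set.ncard {x | x ∈ Γ ∧ wordDist Sg g x ≤ r} ≤ C

section Aux

variable {G : Type*} [Group G]

lemma wordDist_left_inv (Sg : Set G) (g h : G) :
    wordDist Sg g h = wordDist Sg 1 (g⁻¹ * h) := by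
  simp [wordDist]

lemma exists_word {Sg : Set G} (hgen : Subgroup.closure Sg = ⊤) (x : G) :
    ∃ w : List G, (∀ a ∈ w, a ∈ Sg ∨ a⁻¹ ∈ Sg) ∧ w.prod = x := by
  have hx : x ∈ Subgroup.closure Sg := by rw [hgen]; trivial
  induction hx using Subgroup.closure_induction with
  | mem s hs => exact ⟨[s], by simpa using Or.inl hs, by simp⟩
  | one => exact ⟨[], by simp, by simp⟩
  | mul a b _ _ ha hb =>
      obtain ⟨w1, h1, p1⟩ := ha
      obtain ⟨w2, h2, p2⟩ := hb
      exact ⟨w1 ++ w2, by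
        intro a ha'
        rcases List.mem_append.1 ha' with h | h
        · exact h1 a h
        · exact h2 a h, by simp [p1, p2]⟩
  | inv a _ ha =>
      obtain ⟨w, h1, p1⟩ := ha
      refine ⟨(w.map (·⁻¹)).reverse, ?_, ?_⟩
      · intro a ha'
        simp only [List.mem_reverse, List.mem_map] at ha'
        obtain ⟨b, hb, rfl⟩ := ha'
        exact (h1 b hb).symm.imp (by simp) (by simp)
      · rw [← p1, List.prod_inv_reverse]

lemma wordDist_nonempty {Sg : Set G} (hgen : Subgroup.closure Sg = ⊤) (x : G) :
    {n | ∃ w : List G, w.length = n ∧ (∀ a ∈ w, a ∈ Sg ∨ a⁻¹ ∈ Sg) ∧ w.prod = x}.Nonempty := by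
  obtain ⟨w, h1, h2⟩ := exists_word hgen x
  exact ⟨w.length, w, rfl, h1, h2⟩

lemma wordDist_spec {Sg : Set G} (hgen : Subgroup.closure Sg = ⊤) (x : G) :
    ∃ w : List G, w.length = wordDist Sg 1 x ∧ (∀ a ∈ w, a ∈ Sg ∨ a⁻¹ ∈ Sg) ∧ w.prod = x := by
  have := Nat.sInf_mem (wordDist_nonempty hgen x)
  simpa [wordDist] using this

lemma wordDist_le_length (Sg : Set G) (x : G) (w : List G)
    (hw : ∀ a ∈ w, a ∈ Sg ∨ a⁻¹ ∈ Sg) (hp : w.prod = x) :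
    wordDist Sg 1 x ≤ w.length := by
  apply Nat.sInf_le
  exact ⟨w, rfl, hw, by simpa using hp⟩

lemma wordDist_triangle {Sg : Set G} (hgen : Subgroup.closure Sg = ⊤) (x y : G) :
    wordDist Sg 1 (x * y) ≤ wordDist Sg 1 x + wordDist Sg 1 y := by
  obtain ⟨w1, l1, h1, p1⟩ := wordDist_spec hgen x
  obtain ⟨w2, l2, h2, p2⟩ := wordDist_spec hgen y
  have := wordDist_le_length Sg (x * y) (w1 ++ w2)
    (fun a ha => by
      rcases List.mem_append.1 ha with h | h
      · exact h1 a h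
      · exact h2 a h)
    (by simp [p1, p2])
  simpa [l1, l2] using this

lemma words_finite (Sg : Finset G) (n : ℕ) :
    {x : G | ∃ w : List G, w.length ≤ n ∧ (∀ a ∈ w, a ∈ (Sg : Set G) ∨ a⁻¹ ∈ (Sg : Set G)) ∧
      w.prod = x}.Finite := by
  induction n with
  | zero =>
      apply Set.Finite.subset (Set.finite_singleton (1 : G))
      rintro x ⟨w, hl, _, hp⟩
      have : w = [] := List.length_eq_zero_iff.1 (Nat.le_zero.1 hl)
      simp [this] at hp
      simp [← hp]
  | succ n ih =>
      have hS : ((Sg : Set G) ∪ (Sg : Set G)⁻¹).Finite :=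
        (Sg.finite_toSet).union (Sg.finite_toSet.inv)
      apply Set.Finite.subset
        ((Set.finite_singleton (1 : G)).union
          (Set.Finite.biUnion hS (fun a _ => ih.image (a * ·))))
      rintro x ⟨w, hl, hw, hp⟩
      match w with
      | [] => left; simp at hp; simp [← hp]
      | a :: w' =>
          right
          have ha' : a ∈ (Sg : Set G) ∪ (Sg : Set G)⁻¹ := by
            rcases hw a (by simp) with h | h
            · exact Or.inl h
            · exact Or.inr (by simpa using h)
          exact Set.mem_biUnion ha' ⟨w'.prod,
            ⟨w', by simpa using Nat.succ_le_succ_iff.1 hl,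
              fun b hb => hw b (by simp [hb]), rfl⟩, by simpa using hp⟩

lemma ball_finite {Sg : Finset G} (hgen : Subgroup.closure (Sg : Set G) = ⊤) (n : ℕ) :
    {x : G | wordDist (Sg : Set G) 1 x ≤ n}.Finite := by
  apply (words_finite Sg n).subset
  intro x hx
  obtain ⟨w, l, h1, h2⟩ := wordDist_spec hgen x
  exact ⟨w, by rw [l]; exact hx, h1, h2⟩

lemma mean_mono (m : Mean G) {φ ψ : Linf G} (h : ∀ x, (φ : G → ℝ) x ≤ (ψ : G → ℝ) x) :
    m.toFun φ ≤ m.toFun ψ := by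
  have h0 := m.pos (ψ - φ) (fun x => by
    have : ((ψ - φ : Linf G) : G → ℝ) x = (ψ : G → ℝ) x - (φ : G → ℝ) x := rfl
    rw [this]; linarith [h x])
  rw [map_sub] at h0
  linarith

lemma mean_chi_nonneg (m : Mean G) (A : Set G) : 0 ≤ m.toFun (chi A) := by
  apply m.pos
  intro x
  by_cases h : x ∈ A <;> simp [chi, h]

lemma mean_smul_univ (m : Mean G) (c : ℝ) : m.toFun (c • chi Set.univ) = c := by
  rw [map_smul, m.normalized, smul_eq_mul, mul_one]

lemma rT_chi_singleton (m : Mean G) (hm : m.RightInvariant) (x : G) :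
    m.toFun (chi {x}) = m.toFun (chi ({1} : Set G)) := by
  classical
  have : rT x (chi ({x} : Set G)) = chi ({1} : Set G) := by
    apply Subtype.ext
    funext y
    show (if y * x ∈ ({x} : Set G) then (1:ℝ) else 0) = (if y ∈ ({1} : Set G) then 1 else 0)
    have : y * x ∈ ({x} : Set G) ↔ y ∈ ({1} : Set G) := by
      simp [mul_eq_right]
    simp only [this]
  rw [← hm x (chi {x}), this]

lemma mean_singleton_zero [Infinite G] (m : Mean G) (hm : m.RightInvariant) (x : G) :
    m.toFun (chi ({x} : Set G)) = 0 := by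
  classical
  set v := m.toFun (chi ({1} : Set G)) with hv
  have hvx : ∀ y : G, m.toFun (chi ({y} : Set G)) = v := fun y => rT_chi_singleton m hm y
  have hvnn : 0 ≤ v := hv ▸ mean_chi_nonneg m _
  have key : ∀ n : ℕ, (n : ℝ) * v ≤ 1 := by
    intro n
    obtain ⟨B, hB⟩ := Infinite.exists_subset_card_eq G n
    have hsum : m.toFun (∑ y ∈ B, chi ({y} : Set G)) = (n : ℝ) * v := by
      rw [map_sum]
      simp [hvx, hB]
    have hle : m.toFun (∑ y ∈ B, chi ({y} : Set G)) ≤ m.toFun (chi Set.univ) := by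
      apply mean_mono
      intro z
      have hc : ((∑ y ∈ B, chi ({y} : Set G) : Linf G) : G → ℝ) z
          = ∑ y ∈ B, ((chi ({y} : Set G) : Linf G) : G → ℝ) z := by
        rw [AddSubmonoidClass.coe_finset_sum]; simp
      rw [hc]
      have : ∑ y ∈ B, ((chi ({y} : Set G) : Linf G) : G → ℝ) z
          = ∑ y ∈ B, (if z = y then (1:ℝ) else 0) := by
        apply Finset.sum_congr rfl
        intro y _
        show (if z ∈ ({y} : Set G) then (1:ℝ) else 0) = _
        simp [Set.mem_singleton_iff]
      rw [this, Finset.sum_ite_eq B z (fun _ => (1:ℝ))]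
      by_cases h : z ∈ B <;> simp [h, chi]
    rw [hsum, m.normalized] at hle
    exact hle
  have hv0 : v = 0 := by
    by_contra h
    have hpos : 0 < v := lt_of_le_of_ne hvnn (Ne.symm h)
    obtain ⟨n, hn⟩ := exists_nat_gt (1 / v)
    have := key n
    have h2 : (1:ℝ) / v * v < n * v := by
      exact mul_lt_mul_of_pos_right hn hpos
    rw [one_div, inv_mul_cancel₀ (ne_of_gt hpos)] at h2
    linarith
  rw [hvx x, hv0]

lemma chi_finset_sum (F : Finset G) :
    chi (F : Set G) = ∑ y ∈ F, chi ({y} : Set G) := by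
  classical
  apply Subtype.ext
  funext z
  have hc : ((∑ y ∈ F, chi ({y} : Set G) : Linf G) : G → ℝ) z
      = ∑ y ∈ F, ((chi ({y} : Set G) : Linf G) : G → ℝ) z := by
    rw [AddSubmonoidClass.coe_finset_sum]; simp
  rw [hc]
  by_cases h : z ∈ F
  · rw [Finset.sum_eq_single_of_mem z h (fun y _ hy => by
      simp only [chi]
      simp [Set.mem_singleton_iff, Ne.symm hy])]
    simp [chi, h]
  · rw [Finset.sum_eq_zero (fun y hy => by
      simp only [chi]
      simp only [Set.mem_singleton_iff, ite_eq_right_iff]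
      exact fun e => absurd (e ▸ hy) h)]
    simp [chi, h]

lemma mean_finite_zero [Infinite G] (m : Mean G) (hm : m.RightInvariant)
    {F : Set G} (hF : F.Finite) : m.toFun (chi F) = 0 := by
  have : F = (hF.toFinset : Set G) := by simp
  rw [this, chi_finset_sum, map_sum]
  exact Finset.sum_eq_zero (fun y _ => mean_singleton_zero m hm y)

lemma chi_split (A K : Set G) :
    chi A = chi (A \ K) + chi (A ∩ K) := by
  classical
  apply Subtype.ext
  funext z
  show ((chi A : Linf G) : G → ℝ) z
      = ((chi (A \ K) : Linf G) : G → ℝ) z + ((chi (A ∩ K) : Linf G) : G → ℝ) z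
  simp only [chi]
  by_cases h1 : z ∈ A <;> by_cases h2 : z ∈ K <;>
    simp [Set.mem_diff, Set.mem_inter_iff, h1, h2]

end Aux

/-- Let `G` be a finitely generated infinite group and `Γ ⊆ G`
asymptotically sparse. Then every right-invariant mean vanishes on `χ_Γ`. -/
theorem sparse_mean_invisible {G : Type*} [Group G] [Infinite G]
    (Sg : Finset G) (hgen : Subgroup.closure (Sg : Set G) = ⊤)
    (Γ : Set G) (hΓ : IsSparse (Sg : Set G) Γ)
    (m : Mean G) (hm : m.RightInvariant) :
    m.toFun (chi Γ) = 0 := by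
  classical
  obtain ⟨C, hC⟩ := hΓ
  have hnn := mean_chi_nonneg m Γ
  have key : ∀ n : ℕ, (n : ℝ) * m.toFun (chi Γ) ≤ C := by
    intro n
    obtain ⟨B, hBcard⟩ := Infinite.exists_subset_card_eq G n
    set r' : ℕ := max (B.sup (fun b => wordDist (Sg : Set G) 1 b)) 1 with hr'
    have hr'pos : 0 < r' := lt_of_lt_of_le one_pos (le_max_right _ _)
    obtain ⟨R, hR⟩ := hC r' hr'pos
    set K : Set G := {x | wordDist (Sg : Set G) 1 x ≤ R + r'} with hKdef
    have hKfin : K.Finite := ball_finite hgen (R + r')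
    set Γ' : Set G := Γ \ K with hΓ'def
    have hsplit : m.toFun (chi Γ) = m.toFun (chi Γ') := by
      rw [chi_split Γ K, map_add, mean_finite_zero m hm (hKfin.inter_of_right Γ)]
      ring
    have hBr : ∀ h ∈ B, wordDist (Sg : Set G) 1 h ≤ r' := fun h hh =>
      le_trans (Finset.le_sup (f := fun b => wordDist (Sg : Set G) 1 b) hh) (le_max_left _ _)
    have hcard : ∀ x : G, (B.filter (fun h => x * h ∈ Γ')).card ≤ C := by
      intro x
      by_cases hfar : R < wordDist (Sg : Set G) 1 x
      · -- far case: inject into the sparse set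
        set S : Set G := {y | y ∈ Γ ∧ wordDist (Sg : Set G) x y ≤ r'} with hSdef
        have hSfin : S.Finite := by
          apply ((ball_finite hgen r').image (fun y => x * y)).subset
          rintro y ⟨_, hy2⟩
          refine ⟨x⁻¹ * y, ?_, by group⟩
          rwa [wordDist_left_inv] at hy2
        have hSC : S.ncard ≤ C := hR x hfar
        have hinj : Set.InjOn (fun h => x * h) ↑(B.filter (fun h => x * h ∈ Γ')) :=
          fun a _ b _ hab => mul_left_cancel hab
        have hsub : (fun h => x * h) '' ↑(B.filter (fun h => x * h ∈ Γ')) ⊆ S := by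
          rintro y ⟨h, hh, rfl⟩
          simp only [Finset.coe_filter, Set.mem_setOf_eq] at hh
          refine ⟨hh.2.1, ?_⟩
          rw [wordDist_left_inv]
          simpa using hBr h hh.1
        calc (B.filter (fun h => x * h ∈ Γ')).card
            = (↑(B.filter (fun h => x * h ∈ Γ')) : Set G).ncard := by
              rw [Set.ncard_coe_finset]
          _ = ((fun h => x * h) '' ↑(B.filter (fun h => x * h ∈ Γ'))).ncard := by
              rw [Set.ncard_image_of_injOn hinj]
          _ ≤ S.ncard := Set.ncard_le_ncard hsub hSfin
          _ ≤ C := hSC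
      · -- near case: the filter is empty
        push_neg at hfar
        have : B.filter (fun h => x * h ∈ Γ') = ∅ := by
          rw [Finset.filter_eq_empty_iff]
          intro h hh hmem
          apply hmem.2
          show wordDist (Sg : Set G) 1 (x * h) ≤ R + r'
          exact le_trans (wordDist_triangle hgen x h) (add_le_add hfar (hBr h hh))
        rw [this]
        simp
    -- pointwise bound on the sum of translates
    have hbound : ∀ x : G, ((∑ h ∈ B, rT h (chi Γ') : Linf G) : G → ℝ) x ≤ C := by
      intro x
      have hc : ((∑ h ∈ B, rT h (chi Γ') : Linf G) : G → ℝ) x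
          = ∑ h ∈ B, ((rT h (chi Γ') : Linf G) : G → ℝ) x := by
        rw [AddSubmonoidClass.coe_finset_sum]; simp
      rw [hc]
      set f : G → ℝ := fun h => ((chi Γ' : Linf G) : G → ℝ) (x * h) with hfdef
      have hf1 : ∀ h : G, f h ≤ 1 := by
        intro h
        by_cases hx : x * h ∈ Γ' <;> simp [hfdef, chi, hx]
      have hf0 : ∀ h : G, x * h ∉ Γ' → f h = 0 := by
        intro h hx
        simp [hfdef, chi, hx]
      have hterm : ∀ h ∈ B, ((rT h (chi Γ') : Linf G) : G → ℝ) x = f h := fun h _ => rfl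
      rw [Finset.sum_congr rfl hterm]
      calc ∑ h ∈ B, f h = ∑ h ∈ B.filter (fun h => x * h ∈ Γ'), f h := by
            refine (Finset.sum_filter_of_ne ?_).symm
            intro h _ hne
            by_contra hx
            exact hne (hf0 h hx)
        _ ≤ ∑ _h ∈ B.filter (fun h => x * h ∈ Γ'), (1 : ℝ) :=
            Finset.sum_le_sum (fun h _ => hf1 h)
        _ = (B.filter (fun h => x * h ∈ Γ')).card := by simp
        _ ≤ C := by exact_mod_cast hcard x
    have hmsum : m.toFun (∑ h ∈ B, rT h (chi Γ')) = (n : ℝ) * m.toFun (chi Γ') := by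
      rw [map_sum, Finset.sum_congr rfl (fun h _ => hm h (chi Γ')),
        Finset.sum_const, hBcard, nsmul_eq_mul]
    have hle : m.toFun (∑ h ∈ B, rT h (chi Γ')) ≤ m.toFun ((C : ℝ) • chi Set.univ) := by
      apply mean_mono
      intro x
      have hcoe : (((C : ℝ) • chi Set.univ : Linf G) : G → ℝ) x = C := by
        simp [chi]
      rw [hcoe]
      exact hbound x
    rw [hmsum, mean_smul_univ] at hle
    rw [hsplit]
    exact hle
  by_contra h
  have hpos : 0 < m.toFun (chi Γ) := lt_of_le_of_ne hnn (Ne.symm h)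
  obtain ⟨n, hn⟩ := exists_nat_gt ((C : ℝ) / m.toFun (chi Γ))
  have hkn := key n
  rw [div_lt_iff₀ hpos] at hn
  linarith
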